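/- Let (K, v) be a valued field with value group Γ, let n > 1, ε ∈ K with γ = v(ε) > 0 not n-divisible in Γ, and F(x,y) = x^{4n} + ε(xy-ε^2)^n + ε^2 y^{4n}. Then for all a, b in the valuation ring O_v, v(F(a,b)) < 4nγ + γ. -/

import Mathlib

private lemma nsmul_cancel {Γ : Type*} [AddCommGroup Γ] [LinearOrder Γ] [IsOrderedAddMonoid Γ] {k : ℕ} (hk : k ≠ 0)
    {x y : Γ} (h : k • x = k • y) : x = y :=
  (nsmul_right_strictMono hk).injective h

/-- Let `(K,v)` be a valued field with value group `Γ`, `n > 1`, and `γ = v ε` a positive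
element of `Γ` not divisible by `n`.  For `F(x,y) = x^{4n} + ε(xy - ε²)ⁿ + ε²y^{4n}` and
all `a b` in the valuation ring, `v (F a b) < 4nγ + γ`. -/
theorem value_bounded {K Γ : Type*} [Field K] [AddCommGroup Γ] [LinearOrder Γ] [IsOrderedAddMonoid Γ]
    (v : AddValuation K (WithTop Γ)) (n : ℕ) (hn : 1 < n)
    (ε : K) (γ : Γ) (hε : v ε = (γ : WithTop Γ)) (hγ : 0 < γ)
    (hnd : ¬∃ δ : Γ, n • δ = γ)
    (a b : K) (ha : 0 ≤ v a) (hb : 0 ≤ v b) :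
    v (a ^ (4 * n) + ε * (a * b - ε ^ 2) ^ n + ε ^ 2 * b ^ (4 * n)) <
      (((4 * n) • γ + γ : Γ) : WithTop Γ) := by
  have hn0 : n ≠ 0 := by omega
  have key : ∀ δ : Γ, n • δ ≠ γ := fun δ h => hnd ⟨δ, h⟩
  have hε0 : ε ≠ 0 := by
    intro h
    rw [h, v.map_zero] at hε
    exact WithTop.coe_ne_top hε.symm
  have vε2 : v (ε ^ 2) = ((γ + γ : Γ) : WithTop Γ) := by
    rw [v.map_pow, hε, two_nsmul, WithTop.coe_add]
  -- the value of the middle term when v(a*b-ε²) = 2γ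
  have hlt2n : ((γ + n • (γ + γ) : Γ) : WithTop Γ) < (((4 * n) • γ + γ : Γ) : WithTop Γ) := by
    rw [WithTop.coe_lt_coe]
    have h2 : (2 * n) • γ < (4 * n) • γ := nsmul_lt_nsmul_left hγ (by omega)
    calc γ + n • (γ + γ) = (2 * n) • γ + γ := by module
      _ < (4 * n) • γ + γ := add_lt_add_left h2 γ
  rcases eq_or_ne a 0 with ha0 | ha0
  · -- a = 0
    subst ha0
    have e1 : (0:K) ^ (4*n) + ε * ((0:K) * b - ε ^ 2) ^ n + ε ^ 2 * b ^ (4*n)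
        = ε * (-ε^2) ^ n + ε^2 * b^(4*n) := by
      rw [zero_pow (by omega), zero_mul, zero_sub, zero_add]
    rw [e1]
    have v2 : v (ε * (-ε^2)^n) = ((γ + n • (γ + γ) : Γ) : WithTop Γ) := by
      rw [v.map_mul, v.map_pow, v.map_neg, vε2, hε, ← WithTop.coe_nsmul, ← WithTop.coe_add]
    rcases eq_or_ne b 0 with hb0 | hb0
    · subst hb0
      rw [zero_pow (by omega), mul_zero, add_zero, v2]
      exact hlt2n
    · have hvb : v b ≠ ⊤ := v.ne_top_iff.mpr hb0
      lift v b to Γ using hvb with β hβ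
      have v3 : v (ε^2 * b^(4*n)) = ((γ + γ + (4*n) • β : Γ) : WithTop Γ) := by
        rw [v.map_mul, vε2, v.map_pow, ← hβ, ← WithTop.coe_nsmul, ← WithTop.coe_add]
      have hne : v (ε * (-ε^2)^n) ≠ v (ε^2 * b^(4*n)) := by
        rw [v2, v3, Ne, WithTop.coe_eq_coe]
        intro h
        exact key (2 • γ - 4 • β) (by linear_combination (norm := module) h)
      rw [v.map_add_of_distinct_val hne]
      exact lt_of_le_of_lt (min_le_left _ _) (v2 ▸ hlt2n)
  · have hva : v a ≠ ⊤ := v.ne_top_iff.mpr ha0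
    lift v a to Γ using hva with α hα
    have v1 : v (a ^ (4*n)) = (((4*n) • α : Γ) : WithTop Γ) := by
      rw [v.map_pow, ← hα, ← WithTop.coe_nsmul]
    rcases eq_or_ne b 0 with hb0 | hb0
    · -- b = 0
      subst hb0
      have e1 : a ^ (4*n) + ε * (a * 0 - ε ^ 2) ^ n + ε ^ 2 * (0:K) ^ (4*n)
          = a ^ (4*n) + ε * (-ε^2) ^ n := by
        rw [zero_pow (by omega), mul_zero, mul_zero, zero_sub, add_zero]
      rw [e1]
      have v2 : v (ε * (-ε^2)^n) = ((γ + n • (γ + γ) : Γ) : WithTop Γ) := by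
        rw [v.map_mul, v.map_pow, v.map_neg, vε2, hε, ← WithTop.coe_nsmul, ← WithTop.coe_add]
      have hne : v (a ^ (4*n)) ≠ v (ε * (-ε^2)^n) := by
        rw [v1, v2, Ne, WithTop.coe_eq_coe]
        intro h
        exact key (4 • α - 2 • γ) (by linear_combination (norm := module) h)
      rw [v.map_add_of_distinct_val hne]
      exact lt_of_le_of_lt (min_le_right _ _) (v2 ▸ hlt2n)
    · have hvb : v b ≠ ⊤ := v.ne_top_iff.mpr hb0
      lift v b to Γ using hvb with β hβ
      have v3 : v (ε^2 * b^(4*n)) = ((γ + γ + (4*n) • β : Γ) : WithTop Γ) := by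
        rw [v.map_mul, vε2, v.map_pow, ← hβ, ← WithTop.coe_nsmul, ← WithTop.coe_add]
      have d13 : ((4*n) • α : Γ) ≠ (γ + γ + (4*n) • β : Γ) := by
        intro h
        refine key (2 • (α - β)) (nsmul_cancel (two_ne_zero) ?_)
        linear_combination (norm := module) h
      -- helper: from 4nγ+γ ≤ 4nα and α+β = 2γ conclude 2γ+4nβ ≤ 4nγ+γ
      have step : ∀ (hab : α + β = γ + γ), (4*n) • γ + γ ≤ (4*n) • α →
          γ + γ + (4*n) • β ≤ (4*n) • γ + γ := by
        intro hab h1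
        have e : (γ + γ + (4*n) • β) + (4*n) • α = ((4*n) • γ + γ) + ((4*n) • γ + γ) := by
          linear_combination (norm := module) (4*n) • hab
        rw [eq_sub_of_add_eq e]
        calc ((4*n) • γ + γ) + ((4*n) • γ + γ) - (4*n) • α
            ≤ ((4*n) • γ + γ) + ((4*n) • γ + γ) - ((4*n) • γ + γ) :=
              sub_le_sub_left h1 _
          _ = (4*n) • γ + γ := add_sub_cancel_right _ _
      have dC : ∀ x : Γ, γ + γ + (4*n) • β = (4*n) • γ + γ → False := by
        intro _ h
        exact key (4 • γ - 4 • β) (by linear_combination (norm := module) -h)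
      rcases eq_or_ne (a * b - ε^2) 0 with hm | hm
      · -- ab = ε²
        have hab : α + β = γ + γ := by
          have : v (a * b) = v (ε ^ 2) := by rw [sub_eq_zero.mp hm]
          rw [v.map_mul, ← hα, ← hβ, vε2, ← WithTop.coe_add, WithTop.coe_eq_coe] at this
          exact this
        have e1 : a ^ (4*n) + ε * (a * b - ε ^ 2) ^ n + ε ^ 2 * b ^ (4*n)
            = a ^ (4*n) + ε ^ 2 * b ^ (4*n) := by
          rw [hm, zero_pow hn0, mul_zero, add_zero]
        rw [e1]
        have hne : v (a ^ (4*n)) ≠ v (ε^2 * b^(4*n)) := by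
          rw [v1, v3, Ne, WithTop.coe_eq_coe]; exact d13
        rw [v.map_add_of_distinct_val hne, v1, v3]
        rcases lt_or_ge ((4*n) • α) ((4*n) • γ + γ) with h1 | h1
        · exact lt_of_le_of_lt (min_le_left _ _) (WithTop.coe_lt_coe.mpr h1)
        · refine lt_of_le_of_lt (min_le_right _ _) (WithTop.coe_lt_coe.mpr ?_)
          exact lt_of_le_of_ne (step hab h1) (fun h => dC γ h)
      · -- ab ≠ ε² : all three terms nonzero valuation-wise
        have hvm : v (a * b - ε^2) ≠ ⊤ := v.ne_top_iff.mpr hm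
        lift v (a * b - ε^2) to Γ using hvm with m hmv
        have v2 : v (ε * (a * b - ε^2)^n) = ((γ + n • m : Γ) : WithTop Γ) := by
          rw [v.map_mul, v.map_pow, hε, ← hmv, ← WithTop.coe_nsmul, ← WithTop.coe_add]
        have d12 : ((4*n) • α : Γ) ≠ (γ + n • m : Γ) := by
          intro h
          exact key (4 • α - m) (by linear_combination (norm := module) h)
        have d23 : (γ + n • m : Γ) ≠ (γ + γ + (4*n) • β : Γ) := by
          intro h
          exact key (m - 4 • β) (by linear_combination (norm := module) h)
        have h12 : v (a ^ (4*n) + ε * (a * b - ε^2)^n)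
            = min (v (a ^ (4*n))) (v (ε * (a * b - ε^2)^n)) :=
          v.map_add_of_distinct_val (by rw [v1, v2, Ne, WithTop.coe_eq_coe]; exact d12)
        have hne3 : v (a ^ (4*n) + ε * (a * b - ε^2)^n) ≠ v (ε^2 * b^(4*n)) := by
          rw [h12, v1, v2, v3]
          rcases min_cases (((4*n) • α : Γ) : WithTop Γ) ((γ + n • m : Γ) : WithTop Γ) with
            ⟨h, _⟩ | ⟨h, _⟩ <;> rw [h, Ne, WithTop.coe_eq_coe]
          · exact d13
          · exact d23
        rw [v.map_add_of_distinct_val hne3, h12, v1, v2, v3]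
        rcases lt_or_ge ((4*n) • α) ((4*n) • γ + γ) with h1 | h1
        · exact lt_of_le_of_lt (le_trans (min_le_left _ _) (min_le_left _ _))
            (WithTop.coe_lt_coe.mpr h1)
        rcases lt_or_ge (γ + γ + (4*n) • β) ((4*n) • γ + γ) with h3 | h3
        · exact lt_of_le_of_lt (min_le_right _ _) (WithTop.coe_lt_coe.mpr h3)
        -- main case: show v2 < bound by computing m
        refine lt_of_le_of_lt (le_trans (min_le_left _ _) (min_le_right _ _)) ?_
        rcases lt_trichotomy (α + β) (γ + γ) with hc | hc | hc
        · -- v(ab) < v(ε²): m = α + β < 2γ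
          have hm2 : v (a * b - ε^2) = v (a * b) := by
            refine v.map_sub_eq_of_lt_left ?_
            rw [v.map_mul, ← hα, ← hβ, vε2, ← WithTop.coe_add]
            exact WithTop.coe_lt_coe.mpr hc
          have hmval : m = α + β := by
            rw [← hmv, v.map_mul, ← hα, ← hβ, ← WithTop.coe_add, WithTop.coe_eq_coe] at hm2
            exact hm2
          rw [hmval, WithTop.coe_lt_coe]
          have : n • (α + β) < n • (γ + γ) := nsmul_right_strictMono hn0 hc
          calc γ + n • (α + β) < γ + n • (γ + γ) := add_lt_add_right this γ
            _ = (2 * n) • γ + γ := by module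
            _ < (4 * n) • γ + γ := add_lt_add_left (nsmul_lt_nsmul_left hγ (by omega)) γ
        · exact absurd (le_antisymm (step hc h1) h3) (fun h => dC γ h)
        · -- v(ε²) < v(ab): m = 2γ
          have hm2 : v (a * b - ε^2) = v (ε^2) := by
            refine v.map_sub_eq_of_lt_right ?_
            rw [v.map_mul, ← hα, ← hβ, vε2, ← WithTop.coe_add]
            exact WithTop.coe_lt_coe.mpr hc
          have hmval : m = γ + γ := by
            rw [← hmv, vε2, WithTop.coe_eq_coe] at hm2
            exact hm2
          rw [hmval]
          exact hlt2n
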